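/- Let R be a unital non-associative ring, G a commutative monoid, π a G-derivation on R, and S = R[G;π] the Ore monoid ring. Then for every s ∈ S and all u,v ∈ S, the associator (s,u,v) lies in the additive subgroup of S generated by the products (s,r,t)·w with r,t ∈ R (embedded in S) and w ∈ S. In particular, if (s,r,t) = 0 for all r,t ∈ R, then s belongs to the left nucleus N_l(S). -/

import Mathlib

open scoped Classical

/-! Common framework: Ore monoid rings `R[G;π]` over a unital non-associative ring `R`
and a monoid `G`.  A `G`-derivation `π = {π^a_b}` is encoded as a map
`π : G → R → (G →₀ R)`, where `π a r b = π^a_b(r)`; axiom (D0) (finite support in `b`)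
is built into the `Finsupp` encoding.  The Ore monoid ring `S = R[G;π]` is the
additive group `G →₀ R` of finitely supported formal sums `Σ r_a xᵃ`
(with `Finsupp.single a r` representing `r xᵃ`), equipped with the
multiplication `GDeriv.mul` below. -/

/-- A two-sided ideal with respect to a (possibly non-associative, non-unital)
multiplication `m` on an additive group `A`. -/
structure IsIdealWith {A : Type*} [AddCommGroup A] (m : A → A → A) (J : Set A) : Prop where
  zero_mem : (0 : A) ∈ J
  add_mem : ∀ {x y : A}, x ∈ J → y ∈ J → x + y ∈ J
  neg_mem : ∀ {x : A}, x ∈ J → -x ∈ J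
  mul_mem_left : ∀ (r : A) {x : A}, x ∈ J → m r x ∈ J
  mul_mem_right : ∀ {x : A} (r : A), x ∈ J → m x r ∈ J

/-- The subset `F` of `A` is a field with respect to the multiplication `m` with
identity `one`: it is a commutative unital subring in which every nonzero element
has a multiplicative inverse. -/
def IsFieldWith {A : Type*} [AddCommGroup A] (m : A → A → A) (one : A) (F : Set A) : Prop :=
  one ∈ F ∧ (∀ x ∈ F, ∀ y ∈ F, x + y ∈ F) ∧ (∀ x ∈ F, -x ∈ F) ∧
  (∀ x ∈ F, ∀ y ∈ F, m x y ∈ F) ∧ (∀ x ∈ F, ∀ y ∈ F, m x y = m y x) ∧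
  (∀ x ∈ F, x ≠ 0 → ∃ y ∈ F, m x y = one ∧ m y x = one)

/-- A `G`-derivation on `R`: axioms (D0)–(D4).  Here `π a r b` denotes `π^a_b(r)`,
and (D0) holds by the finite support of `π a r : G →₀ R`. -/
structure GDeriv (R : Type*) [NonAssocRing R] (G : Type*) [Monoid G] where
  /-- the family of maps; `π a r b = π^a_b(r)` -/
  π : G → R → (G →₀ R)
  /-- (D1): `π^e_e = id` and `π^e_a = 0` for `a ≠ e` -/
  d1 : ∀ r : R, π 1 r = Finsupp.single 1 r
  /-- (D2): `π^a_b(1) = δ_{a,b}` -/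
  d2 : ∀ a : G, π a (1 : R) = Finsupp.single a (1 : R)
  /-- (D3): each `π^a_b` is additive -/
  d3 : ∀ (a : G) (r s : R), π a (r + s) = π a r + π a s
  /-- (D4): `π^{ab}_c = Σ_{df = c} π^a_d ∘ π^b_f` -/
  d4 : ∀ (a b : G) (r : R),
    π (a * b) r = (π b r).sum fun f s => (π a s).sum fun d t => Finsupp.single (d * f) t

namespace GDeriv

variable {R : Type*} [NonAssocRing R] {G : Type*} [Monoid G] (P : GDeriv R G)

/-- The multiplication of the Ore monoid ring `S = R[G;π]` on `G →₀ R`: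
the biadditive extension of `(r xᵃ)(s xᵇ) = Σ_c r π^a_c(s) x^{cb}`. -/
noncomputable def mul (u v : G →₀ R) : G →₀ R :=
  u.sum fun a r => v.sum fun b s => (P.π a s).sum fun c t => Finsupp.single (c * b) (r * t)

/-- The multiplicative identity `1·xᵉ` of `S`. -/
noncomputable def one (_P : GDeriv R G) : G →₀ R := Finsupp.single 1 1

/-- `R^G = {r ∈ R : π^a_b(r) = δ_{a,b} r}`. -/
def fixed : Set R := {r | ∀ a : G, P.π a r = Finsupp.single a r}

/-- `S^G = Σ_a R^G xᵃ`, the elements of `S` all of whose coefficients lie in `R^G`. -/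
def fixedS : Set (G →₀ R) := {u | ∀ c : G, u c ∈ P.fixed}

/-- (D7): every `π^a_b` is left `R^G`-linear. -/
def LeftLinear : Prop := ∀ a b : G, ∀ s ∈ P.fixed, ∀ r : R, P.π a (s * r) b = s * P.π a r b

/-- (D8): every `π^a_b` is right `R^G`-linear. -/
def RightLinear : Prop := ∀ a b : G, ∀ r : R, ∀ s ∈ P.fixed, P.π a (r * s) b = P.π a r b * s

/-- `π` is strong if (D7) or (D8) holds. -/
def Strong : Prop := P.LeftLinear ∨ P.RightLinear

/-- (D6): `π^a_a = id_R` for all `a ∈ G` (i.e. `π` is unital). -/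
def Unital : Prop := ∀ (a : G) (r : R), P.π a r a = r

/-- `π` is commutative: `π^a_b ∘ π^c_d = π^c_d ∘ π^a_b`. -/
def Commutes : Prop := ∀ (a b c d : G) (r : R), P.π a (P.π c r d) b = P.π c (P.π a r b) d

/-- `π` is well-ordered: there is a well-order on `G` whose strict part `lt`
satisfies `π^a_b = 0` whenever `a ≺ b`. -/
def WellOrdered : Prop :=
  ∃ lt : G → G → Prop, IsWellOrder G lt ∧ ∀ a b : G, lt a b → ∀ r : R, P.π a r b = 0

/-- The extension `π̃^a_b : S → S`, `π̃^a_b(Σ_c r_c x^c) = Σ_c π^a_b(r_c) x^c`. -/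
noncomputable def ext (a b : G) (u : G →₀ R) : G →₀ R := u.sum fun c r => Finsupp.single c (P.π a r b)

/-- The commutator `[u,v] = uv - vu` in `S`. -/
noncomputable def commS (u v : G →₀ R) : G →₀ R := P.mul u v - P.mul v u

/-- The associator `(u,v,w) = (uv)w - u(vw)` in `S`. -/
noncomputable def assocS (u v w : G →₀ R) : G →₀ R := P.mul (P.mul u v) w - P.mul u (P.mul v w)

/-- The left nucleus `N_l(S)`. -/
def Nl : Set (G →₀ R) := {u | ∀ v w, P.assocS u v w = 0}

/-- The middle nucleus `N_m(S)`. -/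
def Nm : Set (G →₀ R) := {u | ∀ v w, P.assocS v u w = 0}

/-- The right nucleus `N_r(S)`. -/
def Nr : Set (G →₀ R) := {u | ∀ v w, P.assocS v w u = 0}

/-- The commuter `C(S)`. -/
def CS : Set (G →₀ R) := {u | ∀ v, P.mul u v = P.mul v u}

/-- The center `Z(S) = C(S) ∩ N_l(S) ∩ N_m(S) ∩ N_r(S)`. -/
def Z : Set (G →₀ R) := P.CS ∩ (P.Nl ∩ P.Nm ∩ P.Nr)

/-- `Z(S)^G = {s ∈ Z(S) : π̃^a_b(s) = δ_{a,b} s}`. -/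
def ZG : Set (G →₀ R) :=
  {s | s ∈ P.Z ∧ ∀ a b : G, P.ext a b s = if a = b then s else 0}

/-- `R` is `G`-simple: `{0}` and `R` are the only `G`-invariant ideals of `R`. -/
def RSimple : Prop :=
  ∀ J : Set R, IsIdealWith (· * ·) J → (∀ a b : G, ∀ r ∈ J, P.π a r b ∈ J) →
    J = {0} ∨ J = Set.univ

/-- `S` is `G`-simple: `{0}` and `S` are the only ideals of `S` invariant under all `π̃^a_b`. -/
def SSimple : Prop :=
  ∀ J : Set (G →₀ R), IsIdealWith P.mul J → (∀ a b : G, ∀ u ∈ J, P.ext a b u ∈ J) →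
    J = {0} ∨ J = Set.univ

end GDeriv

namespace GDeriv

variable {R : Type*} [NonAssocRing R] {G : Type*} [CommMonoid G] (P : GDeriv R G)

lemma pi_zero (a : G) : P.π a 0 = 0 := by
  have h := P.d3 a 0 0
  rw [add_zero] at h
  exact (left_eq_add.mp h)

lemma zero_mul' (v : G →₀ R) : P.mul 0 v = 0 := Finsupp.sum_zero_index

lemma mul_zero' (u : G →₀ R) : P.mul u 0 = 0 := by
  simp [GDeriv.mul]

lemma add_mul' (u u' v : G →₀ R) : P.mul (u + u') v = P.mul u v + P.mul u' v := by
  unfold GDeriv.mul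
  rw [Finsupp.sum_add_index'] <;> intros <;>
    simp [add_mul, Finsupp.single_add, Finsupp.sum_add]

lemma pi_sum_add (a : G) (k : G) (r : R) (s₁ s₂ : R) :
    (P.π a (s₁ + s₂)).sum (fun d t => Finsupp.single (d * k) (r * t)) =
      (P.π a s₁).sum (fun d t => Finsupp.single (d * k) (r * t)) +
      (P.π a s₂).sum (fun d t => Finsupp.single (d * k) (r * t)) := by
  rw [P.d3, Finsupp.sum_add_index'] <;> intros <;> simp [mul_add, Finsupp.single_add]

lemma mul_add' (u v v' : G →₀ R) : P.mul u (v + v') = P.mul u v + P.mul u v' := by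
  unfold GDeriv.mul
  rw [← Finsupp.sum_add]
  refine Finsupp.sum_congr fun a _ => ?_
  rw [Finsupp.sum_add_index']
  · intro b; simp [P.pi_zero]
  · intro b s₁ s₂; exact P.pi_sum_add a b _ s₁ s₂

lemma sub_mul' (u u' v : G →₀ R) : P.mul (u - u') v = P.mul u v - P.mul u' v := by
  have h := P.add_mul' (u - u') u' v
  rw [sub_add_cancel] at h
  exact eq_sub_of_add_eq h.symm

/-- `mul · v` as an additive hom. -/
noncomputable def mulR (v : G →₀ R) : (G →₀ R) →+ (G →₀ R) where
  toFun u := P.mul u v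
  map_zero' := P.zero_mul' v
  map_add' u u' := P.add_mul' u u' v

lemma mul_single_right (u : G →₀ R) (c : G) (t : R) :
    P.mul u (Finsupp.single c t) =
      u.sum fun a r => (P.π a t).sum fun d t' => Finsupp.single (d * c) (r * t') := by
  unfold GDeriv.mul
  refine Finsupp.sum_congr fun a _ => ?_
  rw [Finsupp.sum_single_index]
  simp [P.pi_zero]

lemma single_mul (b : G) (r : R) (v : G →₀ R) :
    P.mul (Finsupp.single b r) v =
      v.sum fun c s => (P.π b s).sum fun d t => Finsupp.single (d * c) (r * t) := by
  unfold GDeriv.mul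
  rw [Finsupp.sum_single_index]
  simp

lemma single_mul_single (b : G) (r : R) (c : G) (t : R) :
    P.mul (Finsupp.single b r) (Finsupp.single c t) =
      (P.π b t).sum fun d t' => Finsupp.single (d * c) (r * t') := by
  rw [P.single_mul, Finsupp.sum_single_index]
  simp [P.pi_zero]

lemma mul_single_one (u : G →₀ R) (b : G) :
    P.mul u (Finsupp.single b (1 : R)) = u.sum fun a r => Finsupp.single (a * b) r := by
  rw [P.mul_single_right]
  refine Finsupp.sum_congr fun a _ => ?_
  rw [P.d2, Finsupp.sum_single_index] <;> simp

lemma single_eq_mul (b : G) (r : R) :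
    Finsupp.single b r = P.mul (Finsupp.single 1 r) (Finsupp.single b (1 : R)) := by
  rw [P.mul_single_one, Finsupp.sum_single_index] <;> simp

lemma single_one_mul_single_one (d c : G) :
    P.mul (Finsupp.single d (1 : R)) (Finsupp.single c (1 : R)) =
      Finsupp.single (d * c) (1 : R) := by
  rw [P.mul_single_one, Finsupp.sum_single_index] <;> simp

/-- `(uv)xᵇ = u(v xᵇ)`. -/
lemma mul_mul_single_one (u v : G →₀ R) (b : G) :
    P.mul (P.mul u v) (Finsupp.single b 1) = P.mul u (P.mul v (Finsupp.single b 1)) := by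
  have hz : ∀ g : G, Finsupp.single (g * b) (0 : R) = 0 := fun g => Finsupp.single_zero _
  have ha : ∀ (g : G) (t₁ t₂ : R),
      Finsupp.single (g * b) (t₁ + t₂) =
        Finsupp.single (g * b) t₁ + Finsupp.single (g * b) t₂ :=
    fun g t₁ t₂ => Finsupp.single_add _ _ _
  have L : P.mul (P.mul u v) (Finsupp.single b 1) =
      u.sum fun a r => v.sum fun c s => (P.π a s).sum fun d t =>
        Finsupp.single (d * c * b) (r * t) := by
    rw [P.mul_single_one]
    show ((u.sum fun a r => v.sum fun c s => (P.π a s).sum fun d t =>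
        Finsupp.single (d * c) (r * t)).sum fun g q => Finsupp.single (g * b) q) = _
    rw [Finsupp.sum_sum_index hz ha]
    refine Finsupp.sum_congr fun a _ => ?_
    rw [Finsupp.sum_sum_index hz ha]
    refine Finsupp.sum_congr fun c s => ?_
    rw [Finsupp.sum_sum_index hz ha]
    refine Finsupp.sum_congr fun d t => ?_
    exact Finsupp.sum_single_index (hz _)
  have Rr : P.mul u (P.mul v (Finsupp.single b 1)) =
      u.sum fun a r => v.sum fun c s => (P.π a s).sum fun d t =>
        Finsupp.single (d * (c * b)) (r * t) := by
    rw [P.mul_single_one]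
    show (u.sum fun a r => (v.sum fun c s => Finsupp.single (c * b) s).sum fun c' s' =>
        (P.π a s').sum fun d t => Finsupp.single (d * c') (r * t)) = _
    refine Finsupp.sum_congr fun a r => ?_
    rw [Finsupp.sum_sum_index (fun c' => by simp [P.pi_zero])
      (fun c' s₁ s₂ => P.pi_sum_add a c' _ s₁ s₂)]
    refine Finsupp.sum_congr fun c s => ?_
    rw [Finsupp.sum_single_index (by simp [P.pi_zero])]
  rw [L, Rr]
  simp [mul_assoc]

/-- `(u xᵇ)v = u(xᵇ v)`. -/
lemma single_one_mid (u : G →₀ R) (b : G) (v : G →₀ R) :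
    P.mul (P.mul u (Finsupp.single b 1)) v = P.mul u (P.mul (Finsupp.single b 1) v) := by
  have L : P.mul (P.mul u (Finsupp.single b 1)) v =
      u.sum fun a r => v.sum fun c s => (P.π b s).sum fun f s' =>
        (P.π a s').sum fun e t => Finsupp.single (e * f * c) (r * t) := by
    rw [P.mul_single_one]
    show ((u.sum fun a r => Finsupp.single (a * b) r).sum fun g q =>
        v.sum fun c s => (P.π g s).sum fun d t => Finsupp.single (d * c) (q * t)) = _
    rw [Finsupp.sum_sum_index
      (fun g => by simp)
      (fun g q₁ q₂ => by
        rw [← Finsupp.sum_add]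
        refine Finsupp.sum_congr fun c s => ?_
        rw [← Finsupp.sum_add]
        refine Finsupp.sum_congr fun d t => ?_
        rw [add_mul, Finsupp.single_add])]
    refine Finsupp.sum_congr fun a r => ?_
    rw [Finsupp.sum_single_index (by simp)]
    refine Finsupp.sum_congr fun c s => ?_
    rw [P.d4]
    rw [Finsupp.sum_sum_index (fun d => by simp) (fun d t₁ t₂ => by
      rw [mul_add, Finsupp.single_add])]
    refine Finsupp.sum_congr fun f s' => ?_
    rw [Finsupp.sum_sum_index (fun d => by simp) (fun d t₁ t₂ => by
      rw [mul_add, Finsupp.single_add])]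
    refine Finsupp.sum_congr fun e t => ?_
    rw [Finsupp.sum_single_index (by simp)]
  have Rr : P.mul u (P.mul (Finsupp.single b 1) v) =
      u.sum fun a r => v.sum fun c s => (P.π b s).sum fun f s' =>
        (P.π a s').sum fun e t => Finsupp.single (e * (f * c)) (r * t) := by
    rw [P.single_mul]
    show (u.sum fun a r => (v.sum fun c s => (P.π b s).sum fun d s' =>
        Finsupp.single (d * c) ((1 : R) * s')).sum fun c' s' =>
        (P.π a s').sum fun e t => Finsupp.single (e * c') (r * t)) = _
    refine Finsupp.sum_congr fun a r => ?_
    rw [Finsupp.sum_sum_index (fun c' => by simp [P.pi_zero])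
      (fun c' s₁ s₂ => P.pi_sum_add a c' _ s₁ s₂)]
    refine Finsupp.sum_congr fun c s => ?_
    rw [Finsupp.sum_sum_index (fun c' => by simp [P.pi_zero])
      (fun c' s₁ s₂ => P.pi_sum_add a c' _ s₁ s₂)]
    refine Finsupp.sum_congr fun f s' => ?_
    rw [one_mul, Finsupp.sum_single_index (by simp [P.pi_zero])]
  rw [L, Rr]
  simp only [mul_assoc]

lemma assoc_zero₂ (s v : G →₀ R) : P.assocS s 0 v = 0 := by
  simp [GDeriv.assocS, P.mul_zero', P.zero_mul']

lemma assoc_zero₃ (s u : G →₀ R) : P.assocS s u 0 = 0 := by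
  simp [GDeriv.assocS, P.mul_zero']

lemma assoc_add₂ (s u u' v : G →₀ R) :
    P.assocS s (u + u') v = P.assocS s u v + P.assocS s u' v := by
  simp only [GDeriv.assocS, P.mul_add', P.add_mul']
  abel

lemma assoc_add₃ (s u v v' : G →₀ R) :
    P.assocS s u (v + v') = P.assocS s u v + P.assocS s u v' := by
  simp only [GDeriv.assocS, P.mul_add']
  abel

/-- `assocS s u ·` as an additive hom. -/
noncomputable def assoc3 (s u : G →₀ R) : (G →₀ R) →+ (G →₀ R) where
  toFun v := P.assocS s u v
  map_zero' := P.assoc_zero₃ s u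
  map_add' v v' := P.assoc_add₃ s u v v'

/-- `(s, u, w xᶜ) = (s, u, w) xᶜ`. -/
lemma assoc_shift (s u w : G →₀ R) (c : G) :
    P.assocS s u (P.mul w (Finsupp.single c 1)) =
      P.mul (P.assocS s u w) (Finsupp.single c 1) := by
  unfold GDeriv.assocS
  rw [P.sub_mul', ← P.mul_mul_single_one (P.mul s u) w c,
    ← P.mul_mul_single_one u w c, ← P.mul_mul_single_one s (P.mul u w) c]

/-- `(s, u xᵇ, v) = (s, u, xᵇ v)`. -/
lemma assoc_mid (s u v : G →₀ R) (b : G) :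
    P.assocS s (P.mul u (Finsupp.single b 1)) v =
      P.assocS s u (P.mul (Finsupp.single b 1) v) := by
  unfold GDeriv.assocS
  rw [← P.mul_mul_single_one s u b, P.single_one_mid (P.mul s u) b v,
    P.single_one_mid u b v]

end GDeriv

/-- If `G` is commutative then for every `s ∈ S` and all `u,v ∈ S`,
the associator `(s,u,v)` lies in the additive subgroup of `S` generated by the
products `(s,r,t)·w` with `r,t ∈ R` (embedded in `S`) and `w ∈ S`.  In particular,
if `(s,r,t) = 0` for all `r,t ∈ R`, then `s ∈ N_l(S)`. -/
theorem stmt5 {R : Type*} [NonAssocRing R] {G : Type*} [CommMonoid G]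
    (P : GDeriv R G) (s : G →₀ R) :
    (∀ u v : G →₀ R, P.assocS s u v ∈ AddSubgroup.closure
      {z : G →₀ R | ∃ (r t : R) (w : G →₀ R),
        z = P.mul (P.assocS s (Finsupp.single 1 r) (Finsupp.single 1 t)) w}) ∧
    ((∀ r t : R, P.assocS s (Finsupp.single 1 r) (Finsupp.single 1 t) = 0) →
      s ∈ P.Nl) := by
  classical
  have core : ∀ (b : G) (r : R) (c : G) (t : R),
      P.assocS s (Finsupp.single b r) (Finsupp.single c t) ∈ AddSubgroup.closure
        {z : G →₀ R | ∃ (r t : R) (w : G →₀ R),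
          z = P.mul (P.assocS s (Finsupp.single 1 r) (Finsupp.single 1 t)) w} := by
    intro b r c t
    have key : P.assocS s (Finsupp.single b r) (Finsupp.single c t) =
        (P.π b t).sum fun d t' =>
          P.mul (P.assocS s (Finsupp.single 1 r) (Finsupp.single 1 t'))
            (Finsupp.single (d * c) 1) := by
      conv_lhs => rw [P.single_eq_mul c t, P.assoc_shift, P.single_eq_mul b r, P.assoc_mid,
        P.single_mul_single]
      simp only [mul_one, one_mul]
      rw [show P.assocS s (Finsupp.single 1 r)
            ((P.π b t).sum fun d t' => Finsupp.single d t') =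
          P.assoc3 s (Finsupp.single 1 r)
            ((P.π b t).sum fun d t' => Finsupp.single d t') from rfl,
        map_finsuppSum]
      rw [show P.mul ((P.π b t).sum fun d t' =>
            P.assoc3 s (Finsupp.single 1 r) (Finsupp.single d t')) (Finsupp.single c 1) =
          P.mulR (Finsupp.single c 1) ((P.π b t).sum fun d t' =>
            P.assoc3 s (Finsupp.single 1 r) (Finsupp.single d t')) from rfl,
        map_finsuppSum]
      refine Finsupp.sum_congr fun d _ => ?_
      show P.mul (P.assocS s (Finsupp.single 1 r) (Finsupp.single d ((P.π b t) d)))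
        (Finsupp.single c 1) = _
      rw [P.single_eq_mul d ((P.π b t) d), P.assoc_shift, P.mul_mul_single_one,
        P.single_one_mul_single_one]
    rw [key, Finsupp.sum]
    exact AddSubgroup.sum_mem _ fun d _ =>
      AddSubgroup.subset_closure ⟨r, _, _, rfl⟩
  have step : ∀ (b : G) (r : R) (v : G →₀ R),
      P.assocS s (Finsupp.single b r) v ∈ AddSubgroup.closure
      {z : G →₀ R | ∃ (r t : R) (w : G →₀ R),
        z = P.mul (P.assocS s (Finsupp.single 1 r) (Finsupp.single 1 t)) w} := by
    intro b r v
    induction v using Finsupp.induction with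
    | zero => rw [P.assoc_zero₃]; exact zero_mem _
    | single_add c t v' _ _ ihv => rw [P.assoc_add₃]; exact add_mem (core b r c t) ihv
  have main : ∀ u v : G →₀ R, P.assocS s u v ∈ AddSubgroup.closure
      {z : G →₀ R | ∃ (r t : R) (w : G →₀ R),
        z = P.mul (P.assocS s (Finsupp.single 1 r) (Finsupp.single 1 t)) w} := by
    intro u v
    induction u using Finsupp.induction with
    | zero => rw [P.assoc_zero₂]; exact zero_mem _
    | single_add b r u _ _ ih =>
      rw [P.assoc_add₂]
      exact add_mem (step b r v) ih
  refine ⟨main, fun h v w => ?_⟩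
  have hle : AddSubgroup.closure
      {z : G →₀ R | ∃ (r t : R) (w : G →₀ R),
        z = P.mul (P.assocS s (Finsupp.single 1 r) (Finsupp.single 1 t)) w} ≤ ⊥ := by
    rw [AddSubgroup.closure_le]
    rintro z ⟨r, t, w', rfl⟩
    rw [h r t, P.zero_mul']
    simp
  exact AddSubgroup.mem_bot.mp (hle (main v w))
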